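/- Let M ∈ ℝ^{d×d} be a symmetric matrix with rank M = 2. Then M can be written as M = a⊙b for some vectors a, b ∈ ℝ^d if and only if M has two eigenvalues of opposite signs, i.e. there exist nonzero vectors v, w ∈ ℝ^d and real numbers λ, μ with Mv = λv, Mw = μw and λμ < 0. -/

import Mathlib

/-- The symmetric tensor product `a ⊙ b := (a ⊗ b + b ⊗ a)/2`. -/
noncomputable def symTensor {d : ℕ} (a b : Fin d → ℝ) : Matrix (Fin d) (Fin d) ℝ :=
  (1 / 2 : ℝ) • (Matrix.vecMulVec a b + Matrix.vecMulVec b a)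


section SymTensorAux

open Matrix Module Submodule

lemma vecMulVec_mulVec' {d : ℕ} (a b x : Fin d → ℝ) :
    (Matrix.vecMulVec a b).mulVec x = (b ⬝ᵥ x) • a := by
  funext i
  simp only [Matrix.mulVec, Matrix.vecMulVec_apply, dotProduct, Pi.smul_apply, smul_eq_mul,
    Finset.mul_sum]
  rw [Finset.sum_mul]
  exact Finset.sum_congr rfl fun j _ => by ring

lemma symTensor_mulVec {d : ℕ} (a b x : Fin d → ℝ) :
    (symTensor a b).mulVec x = (1 / 2 : ℝ) • ((b ⬝ᵥ x) • a + (a ⬝ᵥ x) • b) := by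
  simp [symTensor, Matrix.add_mulVec, Matrix.smul_mulVec, vecMulVec_mulVec']

lemma dot_self_pos {d : ℕ} {a : Fin d → ℝ} (ha : a ≠ 0) : 0 < a ⬝ᵥ a := by
  rcases lt_or_eq_of_le
      (Finset.sum_nonneg fun i _ => mul_self_nonneg (a i) : (0:ℝ) ≤ a ⬝ᵥ a) with h | h
  · exact h
  · exact absurd (dotProduct_self_eq_zero.mp h.symm) ha

/-- Forward direction. -/
lemma symTensor_forward {d : ℕ} (a b : Fin d → ℝ)
    (hrank : (symTensor a b).rank = 2) :
    ∃ (v w : Fin d → ℝ) (lam mu : ℝ), v ≠ 0 ∧ w ≠ 0 ∧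
      (symTensor a b).mulVec v = lam • v ∧ (symTensor a b).mulVec w = mu • w ∧
        lam * mu < 0 := by
  set M := symTensor a b with hMdef
  have hrange : LinearMap.range M.mulVecLin ≤ span ℝ ({a, b} : Set (Fin d → ℝ)) := by
    rintro y ⟨x, rfl⟩
    rw [Matrix.mulVecLin_apply, symTensor_mulVec]
    exact Submodule.smul_mem _ _ (Submodule.add_mem _
      (Submodule.smul_mem _ _ (subset_span (by simp)))
      (Submodule.smul_mem _ _ (subset_span (by simp))))
  have h2 : (2 : ℕ) ≤ finrank ℝ (span ℝ ({a, b} : Set (Fin d → ℝ))) := by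
    rw [← hrank]
    exact Submodule.finrank_mono hrange
  have hli : ∀ s t : ℝ, s • a + t • b = 0 → s = 0 ∧ t = 0 := by
    by_contra hdep
    rw [← LinearIndependent.pair_iff] at hdep
    have hspan1 : finrank ℝ (span ℝ ({a, b} : Set (Fin d → ℝ))) ≤ 1 := by
      rw [LinearIndependent.pair_iff] at hdep
      push_neg at hdep
      obtain ⟨s, t, hst, hne⟩ := hdep
      rcases eq_or_ne s 0 with hs | hs
      · have ht : t ≠ 0 := fun h => hne hs h
        have hb : b = (0:ℝ) • a := by
          have : t • b = 0 := by rwa [hs, zero_smul, zero_add] at hst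
          rw [zero_smul]
          exact (smul_eq_zero.mp this).resolve_left ht
        have hle : span ℝ ({a, b} : Set (Fin d → ℝ)) ≤ span ℝ ({a} : Set (Fin d → ℝ)) := by
          rw [span_le]
          rintro x (rfl | rfl)
          · exact subset_span rfl
          · rw [show (x : Fin d → ℝ) = (0:ℝ) • a from hb]
            exact Submodule.smul_mem _ _ (subset_span rfl)
        exact le_trans (Submodule.finrank_mono hle)
          (by simpa using finrank_span_le_card ({a} : Set (Fin d → ℝ)))
      · have ha : a = (-t/s) • b := by
          have h1 : s • a = -(t • b) := by linear_combination (norm := module) hst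
          have h2 : (s⁻¹ : ℝ) • s • a = (s⁻¹ : ℝ) • -(t • b) := by rw [h1]
          rw [smul_smul, inv_mul_cancel₀ hs, one_smul] at h2
          rw [h2, smul_neg, smul_smul]
          rw [show -t/s = -(s⁻¹ * t) by field_simp]
          module
        have hle : span ℝ ({a, b} : Set (Fin d → ℝ)) ≤ span ℝ ({b} : Set (Fin d → ℝ)) := by
          rw [span_le]
          rintro x (rfl | rfl)
          · rw [show (x : Fin d → ℝ) = (-t/s) • b from ha]
            exact Submodule.smul_mem _ _ (subset_span rfl)
          · exact subset_span rfl
        exact le_trans (Submodule.finrank_mono hle)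
          (by simpa using finrank_span_le_card ({b} : Set (Fin d → ℝ)))
    omega
  have ha0 : a ≠ 0 := fun h => one_ne_zero (hli 1 0 (by simp [h])).1
  have hb0 : b ≠ 0 := fun h => one_ne_zero (hli 0 1 (by simp [h])).2
  set A := a ⬝ᵥ a with hA
  set B := b ⬝ᵥ b with hB
  set C := a ⬝ᵥ b with hC
  have hba : b ⬝ᵥ a = C := dotProduct_comm b a
  have hApos : 0 < A := dot_self_pos ha0
  have hBpos : 0 < B := dot_self_pos hb0
  -- strict Cauchy-Schwarz
  have hCS : C * C < A * B := by
    set u : Fin d → ℝ := b - (C / A) • a with hu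
    have hu0 : u ≠ 0 := by
      intro h
      have hb' : (C / A) • a + (-1 : ℝ) • b = 0 := by
        have h2 := sub_eq_zero.mp h
        rw [← h2]
        module
      exact absurd (hli _ _ hb').2 (by norm_num)
    have huu : u ⬝ᵥ u = B - C * C / A := by
      simp only [hu, dotProduct_sub, sub_dotProduct, smul_dotProduct, dotProduct_smul,
        smul_eq_mul]
      rw [hba, ← hA, ← hB, ← hC]
      field_simp
      ring
    have hpos := dot_self_pos hu0
    rw [huu] at hpos
    have h3 : C * C / A < B := by linarith
    have := (div_lt_iff₀ hApos).mp h3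
    linarith
  -- eigenvectors
  set na := Real.sqrt A with hna
  set nb := Real.sqrt B with hnb
  have hna2 : na * na = A := Real.mul_self_sqrt hApos.le
  have hnb2 : nb * nb = B := Real.mul_self_sqrt hBpos.le
  have hnapos : 0 < na := Real.sqrt_pos.mpr hApos
  have hnbpos : 0 < nb := Real.sqrt_pos.mpr hBpos
  refine ⟨nb • a + na • b, nb • a - na • b, (C + na * nb) / 2, (C - na * nb) / 2,
    ?_, ?_, ?_, ?_, ?_⟩
  · intro h
    exact absurd (hli _ _ h).1 hnbpos.ne'
  · intro h
    have : nb • a + (-na) • b = 0 := by rw [← h]; module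
    exact absurd (hli _ _ this).1 hnbpos.ne'
  · rw [symTensor_mulVec]
    rw [dotProduct_add, dotProduct_add, dotProduct_smul, dotProduct_smul, dotProduct_smul,
      dotProduct_smul, ← hA, ← hB, ← hC, hba]
    simp only [smul_eq_mul]
    match_scalars
    · linear_combination (-na/2 : ℝ) * hnb2
    · linear_combination (-nb/2 : ℝ) * hna2
  · rw [symTensor_mulVec]
    rw [dotProduct_sub, dotProduct_sub, dotProduct_smul, dotProduct_smul, dotProduct_smul,
      dotProduct_smul, ← hA, ← hB, ← hC, hba]
    simp only [smul_eq_mul]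
    match_scalars
    · linear_combination (na/2 : ℝ) * hnb2
    · linear_combination (-nb/2 : ℝ) * hna2
  · have : (C + na * nb) / 2 * ((C - na * nb) / 2) = (C * C - A * B) / 4 := by
      rw [← hna2, ← hnb2]; ring
    rw [this]
    linarith

/-- Backward direction, normalized so that `lam > 0 > mu`. -/
lemma symTensor_backward {d : ℕ} (M : Matrix (Fin d) (Fin d) ℝ)
    (hM : M.IsSymm) (hrank : M.rank = 2) (v w : Fin d → ℝ) (lam mu : ℝ)
    (hv : v ≠ 0) (hw : w ≠ 0) (hMv : M.mulVec v = lam • v) (hMw : M.mulVec w = mu • w)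
    (hlam : 0 < lam) (hmu : mu < 0) :
    ∃ a b : Fin d → ℝ, M = symTensor a b := by
  have hsym : ∀ x y : Fin d → ℝ, M.mulVec x ⬝ᵥ y = x ⬝ᵥ M.mulVec y := by
    intro x y
    rw [Matrix.dotProduct_mulVec, ← Matrix.mulVec_transpose, hM]
  set A := v ⬝ᵥ v with hA
  set B := w ⬝ᵥ w with hB
  have hApos : 0 < A := dot_self_pos hv
  have hBpos : 0 < B := dot_self_pos hw
  have hlm : lam ≠ mu := by linarith
  -- orthogonality of the eigenvectors
  have hvw : v ⬝ᵥ w = 0 := by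
    have h1 : lam * (v ⬝ᵥ w) = mu * (v ⬝ᵥ w) := by
      have := hsym v w
      rwa [hMv, hMw, smul_dotProduct, dotProduct_smul, smul_eq_mul, smul_eq_mul] at this
    by_contra h
    exact hlm (mul_right_cancel₀ h h1)
  have hwv : w ⬝ᵥ v = 0 := by rw [dotProduct_comm]; exact hvw
  -- orthogonality of the kernel to v and w
  have hker_v : ∀ x, M.mulVec x = 0 → v ⬝ᵥ x = 0 := by
    intro x hx
    have := hsym v x
    rw [hMv, hx, dotProduct_zero, smul_dotProduct, smul_eq_mul] at this
    exact (mul_eq_zero.mp this).resolve_left hlam.ne'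
  have hker_w : ∀ x, M.mulVec x = 0 → w ⬝ᵥ x = 0 := by
    intro x hx
    have := hsym w x
    rw [hMw, hx, dotProduct_zero, smul_dotProduct, smul_eq_mul] at this
    exact (mul_eq_zero.mp this).resolve_left hmu.ne
  -- linear independence of v, w
  have hli : LinearIndependent ℝ ![v, w] := by
    rw [LinearIndependent.pair_iff]
    intro s t hst
    have h1 : (v ⬝ᵥ (s • v + t • w)) = s * A := by
      rw [dotProduct_add, dotProduct_smul, dotProduct_smul, hvw]; simp [hA]
    have h2 : (w ⬝ᵥ (s • v + t • w)) = t * B := by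
      rw [dotProduct_add, dotProduct_smul, dotProduct_smul, hwv]; simp [hB]
    rw [hst, dotProduct_zero] at h1 h2
    exact ⟨by
      have := mul_eq_zero.mp h1.symm
      exact this.resolve_right hApos.ne', by
      have := mul_eq_zero.mp h2.symm
      exact this.resolve_right hBpos.ne'⟩
  -- the kernel and the span of v, w fill up everything
  set K := LinearMap.ker M.mulVecLin with hK
  set W := span ℝ ({v, w} : Set (Fin d → ℝ)) with hW
  have hWrank : finrank ℝ W = 2 := by
    have := finrank_span_eq_card hli
    rw [show Set.range ![v, w] = ({v, w} : Set (Fin d → ℝ)) by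
      ext x; simp [Fin.exists_fin_two, or_comm]] at this
    rw [hW, this]
    simp
  have hKrank : finrank ℝ K + 2 = d := by
    have h0 := LinearMap.finrank_range_add_finrank_ker M.mulVecLin
    rw [Module.finrank_fin_fun, ← hK] at h0
    have hr : finrank ℝ (LinearMap.range M.mulVecLin) = 2 := hrank
    omega
  have hdisj : K ⊓ W = ⊥ := by
    rw [eq_bot_iff]
    rintro x ⟨hxK, hxW⟩
    obtain ⟨s, t, rfl⟩ := Submodule.mem_span_pair.mp hxW
    have hx0 : M.mulVec (s • v + t • w) = 0 := hxK
    rw [Matrix.mulVec_add, Matrix.mulVec_smul, Matrix.mulVec_smul, hMv, hMw] at hx0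
    have h1 : v ⬝ᵥ (s • lam • v + t • mu • w) = s * lam * A := by
      simp only [dotProduct_add, dotProduct_smul, hvw, smul_eq_mul]
      ring
    have h2 : w ⬝ᵥ (s • lam • v + t • mu • w) = t * mu * B := by
      simp only [dotProduct_add, dotProduct_smul, hwv, smul_eq_mul]
      ring
    rw [hx0, dotProduct_zero] at h1 h2
    have hs : s = 0 := by
      rcases mul_eq_zero.mp h1.symm with h | h
      · rcases mul_eq_zero.mp h with h' | h'
        · exact h'
        · exact absurd h' hlam.ne'
      · exact absurd h hApos.ne'
    have ht : t = 0 := by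
      rcases mul_eq_zero.mp h2.symm with h | h
      · rcases mul_eq_zero.mp h with h' | h'
        · exact h'
        · exact absurd h' hmu.ne
      · exact absurd h hBpos.ne'
    simp [hs, ht]
  have htop : K ⊔ W = ⊤ := by
    apply Submodule.eq_top_of_finrank_eq
    have h0 := Submodule.finrank_sup_add_finrank_inf_eq K W
    rw [hdisj, finrank_bot] at h0
    rw [Module.finrank_fin_fun]
    omega
  -- the residual matrix N is zero
  set N : Matrix (Fin d) (Fin d) ℝ :=
    M - (lam / A) • Matrix.vecMulVec v v - (mu / B) • Matrix.vecMulVec w w with hN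
  have hNmul : ∀ x, N.mulVec x =
      M.mulVec x - ((lam / A) * (v ⬝ᵥ x)) • v - ((mu / B) * (w ⬝ᵥ x)) • w := by
    intro x
    rw [hN, Matrix.sub_mulVec, Matrix.sub_mulVec, Matrix.smul_mulVec,
      Matrix.smul_mulVec, vecMulVec_mulVec', vecMulVec_mulVec', smul_smul, smul_smul]
  have hNzero : ∀ x, N.mulVec x = 0 := by
    have hker : ∀ x ∈ K, N.mulVec x = 0 := by
      intro x hx
      have hx0 : M.mulVec x = 0 := hx
      rw [hNmul, hx0, hker_v x hx0, hker_w x hx0]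
      simp
    have hvz : N.mulVec v = 0 := by
      rw [hNmul, hMv, hwv, ← hA]
      rw [show lam / A * A = lam from by field_simp]
      simp
    have hwz : N.mulVec w = 0 := by
      rw [hNmul, hMw, hvw, ← hB]
      rw [show mu / B * B = mu from by field_simp]
      simp
    have hWzero : ∀ x ∈ W, N.mulVec x = 0 := by
      intro x hx
      obtain ⟨s, t, rfl⟩ := Submodule.mem_span_pair.mp hx
      rw [Matrix.mulVec_add, Matrix.mulVec_smul, Matrix.mulVec_smul, hvz, hwz]
      simp
    intro x
    have hx : x ∈ K ⊔ W := htop ▸ Submodule.mem_top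
    obtain ⟨y, hy, z, hz, rfl⟩ := Submodule.mem_sup.mp hx
    rw [Matrix.mulVec_add, hker y hy, hWzero z hz, add_zero]
  have hN0 : N = 0 := by
    ext i j
    have := congrFun (hNzero (Pi.single j 1)) i
    simpa [Matrix.mulVec, dotProduct, Pi.single_apply] using this
  have hMdecomp : M = (lam / A) • Matrix.vecMulVec v v + (mu / B) • Matrix.vecMulVec w w := by
    have : M - (lam / A) • Matrix.vecMulVec v v - (mu / B) • Matrix.vecMulVec w w = 0 := hN0
    linear_combination (norm := abel) this
  -- construct a and b
  set p := Real.sqrt (lam / A) with hp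
  set q := Real.sqrt (-(mu / B)) with hq
  have hp0 : (0:ℝ) ≤ lam / A := le_of_lt (div_pos hlam hApos)
  have hq0 : (0:ℝ) ≤ -(mu / B) := by
    have : mu / B < 0 := div_neg_of_neg_of_pos hmu hBpos
    linarith
  have hp2 : p * p = lam / A := Real.mul_self_sqrt hp0
  have hq2 : q * q = -(mu / B) := Real.mul_self_sqrt hq0
  refine ⟨p • v + q • w, p • v - q • w, ?_⟩
  ext i j
  rw [hMdecomp]
  simp only [symTensor, Matrix.smul_apply, Matrix.add_apply, Matrix.vecMulVec_apply,
    Pi.add_apply, Pi.sub_apply, Pi.smul_apply, smul_eq_mul]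
  have hbq : (mu / B) = -(q * q) := by rw [hq2]; ring
  rw [← hp2, hbq]
  ring


end SymTensorAux

open Matrix Module Submodule in
/-- A symmetric matrix of rank two can be written as `a ⊙ b` if and only if it has two
(nonzero, real) eigenvalues of opposite signs. -/
theorem symm_rank_two_symTensor_iff {d : ℕ} (M : Matrix (Fin d) (Fin d) ℝ)
    (hM : M.IsSymm) (hrank : M.rank = 2) :
    (∃ a b : Fin d → ℝ, M = symTensor a b) ↔
      ∃ (v w : Fin d → ℝ) (lam mu : ℝ), v ≠ 0 ∧ w ≠ 0 ∧
        M.mulVec v = lam • v ∧ M.mulVec w = mu • w ∧ lam * mu < 0 := by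
  constructor
  · rintro ⟨a, b, rfl⟩
    exact symTensor_forward a b hrank
  · rintro ⟨v, w, lam, mu, hv, hw, hMv, hMw, hlm⟩
    rcases mul_neg_iff.mp hlm with ⟨hlam, hmu⟩ | ⟨hlam, hmu⟩
    · exact symTensor_backward M hM hrank v w lam mu hv hw hMv hMw hlam hmu
    · exact symTensor_backward M hM hrank w v mu lam hw hv hMw hMv hmu hlam
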